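/- Let A > 0, m > 0 and b > 0, set γ = b/m and ρ = 1 − exp(−m²/(2A²)). Then the head and tail of the series ∑_t exp(−(b + m t)²/(2 t A²)) satisfy: ∑_{t=1}^{⌊γ/2⌋} exp(−(b + m t)²/(2 t A²)) ≤ ρ⁻¹ · exp(−2 b m / A²), and ∑_{t=⌈2γ⌉}^{∞} exp(−(b + m t)²/(2 t A²)) ≤ ρ⁻¹ · exp(−2 b m / A²). -/

import Mathlib

open Real Finset

theorem head_tail_exp_quadratic_bound (A m b : ℝ) (hA : 0 < A) (hm : 0 < m) (hb : 0 < b)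
    (γ : ℝ) (hγ : γ = b / m)
    (ρ : ℝ) (hρ : ρ = 1 - Real.exp (-(m ^ 2) / (2 * A ^ 2))) :
    (∑ t ∈ Finset.Icc 1 ⌊γ / 2⌋₊, Real.exp (-(b + m * t) ^ 2 / (2 * t * A ^ 2)) ≤
        ρ⁻¹ * Real.exp (-(2 * b * m) / A ^ 2)) ∧
      (∑' t : {t : ℕ // ⌈2 * γ⌉₊ ≤ t},
          Real.exp (-(b + m * (t : ℕ)) ^ 2 / (2 * (t : ℕ) * A ^ 2)) ≤
        ρ⁻¹ * Real.exp (-(2 * b * m) / A ^ 2)) := by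
  have hA2 : (0:ℝ) < A ^ 2 := by positivity
  set r := Real.exp (-(m ^ 2) / (2 * A ^ 2)) with hr
  have hr0 : 0 < r := Real.exp_pos _
  have hr1 : r < 1 := by
    rw [hr, Real.exp_lt_one_iff]
    have : (0:ℝ) < m ^ 2 / (2 * A ^ 2) := by positivity
    rw [neg_div]; linarith
  have hρ0 : 0 < ρ := by rw [hρ]; linarith
  have hγ0 : 0 < γ := by rw [hγ]; positivity
  have hrpow : ∀ t : ℕ, r ^ t = Real.exp ((t:ℝ) * (-(m ^ 2) / (2 * A ^ 2))) := by
    intro t; rw [hr, ← Real.exp_nat_mul]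
  have hAne : A ≠ 0 := hA.ne'
  -- key exponent inequality for the tail (all t ≥ 1)
  have tailexp : ∀ T : ℝ, 1 ≤ T →
      -(b + m * T) ^ 2 / (2 * T * A ^ 2) ≤ -(b * m) / A ^ 2 + T * (-(m ^ 2) / (2 * A ^ 2)) := by
    intro T hT
    have hTpos : (0:ℝ) < T := by linarith
    rw [div_le_iff₀ (by positivity : (0:ℝ) < 2 * T * A ^ 2)]
    have h1 : (-(b * m) / A ^ 2) * (2 * T * A ^ 2) = -(b * m) * (2 * T) := by
      field_simp
    have h2 : (T * (-(m ^ 2) / (2 * A ^ 2))) * (2 * T * A ^ 2) = -(m ^ 2) * T ^ 2 := by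
      field_simp
    rw [add_mul, h1, h2]
    nlinarith [sq_nonneg b]
  constructor
  · -- head
    have hterm : ∀ t ∈ Finset.Icc 1 ⌊γ / 2⌋₊,
        Real.exp (-(b + m * t) ^ 2 / (2 * t * A ^ 2)) ≤
          Real.exp (-(2 * b * m) / A ^ 2) * r ^ t := by
      intro t ht
      obtain ⟨ht1, ht2⟩ := Finset.mem_Icc.mp ht
      have hT1 : (1:ℝ) ≤ (t:ℝ) := by exact_mod_cast ht1
      have hT2 : (t:ℝ) ≤ γ / 2 :=
        le_trans (by exact_mod_cast ht2) (Nat.floor_le (by positivity))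
      have hbt : 2 * m * (t:ℝ) ≤ b := by
        rw [hγ] at hT2
        rw [div_div] at hT2
        have := (le_div_iff₀ (by positivity : (0:ℝ) < m * 2)).mp hT2
        linarith
      rw [hrpow, ← Real.exp_add, Real.exp_le_exp]
      have hTpos : (0:ℝ) < (t:ℝ) := by linarith
      rw [div_le_iff₀ (by positivity : (0:ℝ) < 2 * (t:ℝ) * A ^ 2)]
      have h1 : (-(2 * b * m) / A ^ 2) * (2 * (t:ℝ) * A ^ 2) = -(2 * b * m) * (2 * t) := by
        field_simp
      have h2 : ((t:ℝ) * (-(m ^ 2) / (2 * A ^ 2))) * (2 * (t:ℝ) * A ^ 2) = -(m^2) * t^2 := by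
        field_simp
      rw [add_mul, h1, h2]
      nlinarith [mul_le_mul_of_nonneg_left hbt (le_of_lt hb)]
    calc ∑ t ∈ Finset.Icc 1 ⌊γ / 2⌋₊, Real.exp (-(b + m * t) ^ 2 / (2 * t * A ^ 2))
        ≤ ∑ t ∈ Finset.Icc 1 ⌊γ / 2⌋₊, Real.exp (-(2 * b * m) / A ^ 2) * r ^ t :=
          Finset.sum_le_sum hterm
      _ = Real.exp (-(2 * b * m) / A ^ 2) * ∑ t ∈ Finset.Icc 1 ⌊γ / 2⌋₊, r ^ t := by
          rw [Finset.mul_sum]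
      _ ≤ Real.exp (-(2 * b * m) / A ^ 2) * ρ⁻¹ := by
          apply mul_le_mul_of_nonneg_left _ (Real.exp_pos _).le
          have hs : Summable fun t : ℕ => r ^ t := summable_geometric_of_lt_one hr0.le hr1
          calc ∑ t ∈ Finset.Icc 1 ⌊γ / 2⌋₊, r ^ t
              ≤ ∑' t : ℕ, r ^ t := Summable.sum_le_tsum _ (fun t _ => by positivity) hs
            _ = (1 - r)⁻¹ := tsum_geometric_of_lt_one hr0.le hr1
            _ = ρ⁻¹ := by rw [hρ]
      _ = ρ⁻¹ * Real.exp (-(2 * b * m) / A ^ 2) := mul_comm _ _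
  · -- tail
    set t0 := ⌈2 * γ⌉₊ with ht0def
    have ht0pos : 1 ≤ t0 := Nat.one_le_iff_ne_zero.mpr (by
      simp [ht0def, Nat.ceil_eq_zero, not_le]
      linarith)
    have htc : 2 * γ ≤ (t0:ℝ) := Nat.le_ceil _
    have C2 : Real.exp (-(b * m) / A ^ 2) * r ^ t0 ≤ Real.exp (-(2 * b * m) / A ^ 2) := by
      rw [hrpow, ← Real.exp_add, Real.exp_le_exp]
      have h2b : 2 * b ≤ (t0:ℝ) * m := by
        rw [hγ] at htc
        have h := mul_le_mul_of_nonneg_right htc hm.le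
        rw [mul_assoc, div_mul_cancel₀ b hm.ne'] at h
        linarith
      rw [← sub_nonneg]
      have e : (-(2 * b * m) / A ^ 2) - (-(b * m) / A ^ 2 + (t0:ℝ) * (-(m ^ 2) / (2 * A ^ 2)))
          = ((t0:ℝ) * m ^ 2 - 2 * b * m) / (2 * A ^ 2) := by
        field_simp; ring
      rw [e]
      apply div_nonneg _ (by positivity)
      nlinarith
    -- pointwise bound on the subtype, via the equiv with ℕ
    let e : ℕ ≃ {t : ℕ // t0 ≤ t} :=
      { toFun := fun n => ⟨t0 + n, Nat.le_add_right _ _⟩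
        invFun := fun t => t.1 - t0
        left_inv := fun n => by simp
        right_inv := fun t => Subtype.ext (by have := t.2; simp; omega) }
    rw [← e.tsum_eq]
    have hbound : ∀ n : ℕ,
        Real.exp (-(b + m * ((e n : ℕ) : ℝ)) ^ 2 / (2 * ((e n : ℕ) : ℝ) * A ^ 2)) ≤
          (Real.exp (-(b * m) / A ^ 2) * r ^ t0) * r ^ n := by
      intro n
      have hcast : ((e n : ℕ) : ℝ) = ((t0 + n : ℕ) : ℝ) := rfl
      have hT1 : (1:ℝ) ≤ ((t0 + n : ℕ) : ℝ) := by
        have : 1 ≤ t0 + n := le_trans ht0pos (Nat.le_add_right _ _)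
        exact_mod_cast this
      rw [hcast]
      have := tailexp ((t0 + n : ℕ) : ℝ) hT1
      calc Real.exp (-(b + m * ((t0 + n : ℕ) : ℝ)) ^ 2 / (2 * ((t0 + n : ℕ) : ℝ) * A ^ 2))
          ≤ Real.exp (-(b * m) / A ^ 2 + ((t0 + n : ℕ) : ℝ) * (-(m ^ 2) / (2 * A ^ 2))) :=
            Real.exp_le_exp.mpr this
        _ = Real.exp (-(b * m) / A ^ 2) * r ^ (t0 + n) := by
            rw [hrpow, ← Real.exp_add]
        _ = (Real.exp (-(b * m) / A ^ 2) * r ^ t0) * r ^ n := by rw [pow_add]; ring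
    have hsg : Summable fun n : ℕ => (Real.exp (-(b * m) / A ^ 2) * r ^ t0) * r ^ n :=
      (summable_geometric_of_lt_one hr0.le hr1).mul_left _
    have hsf : Summable fun n : ℕ =>
        Real.exp (-(b + m * ((e n : ℕ) : ℝ)) ^ 2 / (2 * ((e n : ℕ) : ℝ) * A ^ 2)) :=
      Summable.of_nonneg_of_le (fun n => (Real.exp_pos _).le) hbound hsg
    calc (∑' n : ℕ, Real.exp (-(b + m * ((e n : ℕ) : ℝ)) ^ 2 / (2 * ((e n : ℕ) : ℝ) * A ^ 2)))
        ≤ ∑' n : ℕ, (Real.exp (-(b * m) / A ^ 2) * r ^ t0) * r ^ n :=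
          Summable.tsum_le_tsum hbound hsf hsg
      _ = (Real.exp (-(b * m) / A ^ 2) * r ^ t0) * (1 - r)⁻¹ := by
          rw [tsum_mul_left, tsum_geometric_of_lt_one hr0.le hr1]
      _ ≤ Real.exp (-(2 * b * m) / A ^ 2) * (1 - r)⁻¹ := by
          apply mul_le_mul_of_nonneg_right C2 (inv_nonneg.mpr (by linarith : (0:ℝ) ≤ 1 - r))
      _ = ρ⁻¹ * Real.exp (-(2 * b * m) / A ^ 2) := by rw [hρ]; ring
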